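/- Let m ≥ 1, let r₁,…,r_m > 0 and δ₁,…,δ_m > 0, and define the Young function N(s) := Σ_{i=1}^m δ_i·|s|^{r_i+1}. Let N*(s) := sup{ r|s| − N(r) : r ≥ 0 } be its conjugate, set r := min_i r_i and θ := 2^{1/r}. Then N*(2s) ≤ θ^{r+1}·N*(s) for all s ∈ ℝ; in particular N* is Δ₂-regular. (Paper Example 3.5(i), equation (3.11).) -/

import Mathlib

/-- The conjugate Young function `N*(s) := sup { r·|s| − N(r) : r ≥ 0 }`. -/
noncomputable def youngConj (N : ℝ → ℝ) (s : ℝ) : ℝ :=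
  sSup {v : ℝ | ∃ r : ℝ, 0 ≤ r ∧ v = r * |s| - N r}

/-- If `1 < p` and `0 < c`, the function `ρ ↦ ρ a - c ρ^p` is bounded above on `[0, ∞)`. -/
lemma aux_bound (c p a : ℝ) (hc : 0 < c) (hp : 1 < p) (ha : 0 ≤ a) :
    ∃ K : ℝ, ∀ ρ : ℝ, 0 ≤ ρ → ρ * a ≤ c * ρ ^ p + K := by
  set q := Real.conjExponent p with hq
  have hpq : p.HolderConjugate q := Real.HolderConjugate.conjExponent hp
  have hcp : 0 < c * p := by positivity
  set w : ℝ := (c * p) ^ (1 / p) with hw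
  have hwpos : 0 < w := Real.rpow_pos_of_pos hcp _
  refine ⟨(a / w) ^ q / q, fun ρ hρ => ?_⟩
  have key := Real.young_inequality_of_nonneg (a := w * ρ) (b := a / w)
    (by positivity) (by positivity) hpq
  have h1 : (w * ρ) * (a / w) = ρ * a := by
    field_simp
  have h2 : (w * ρ) ^ p = (c * p) * ρ ^ p := by
    rw [Real.mul_rpow hwpos.le hρ, hw, ← Real.rpow_mul hcp.le,
      one_div_mul_cancel hpq.ne_zero, Real.rpow_one]
  rw [h1, h2] at key
  calc ρ * a ≤ (c * p) * ρ ^ p / p + (a / w) ^ q / q := key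
    _ = c * ρ ^ p + (a / w) ^ q / q := by
        have hp0 : p ≠ 0 := hpq.ne_zero
        field_simp

theorem stmt3 (m : ℕ) (hm : 1 ≤ m) (r δ : Fin m → ℝ)
    (hr : ∀ i, 0 < r i) (hδ : ∀ i, 0 < δ i)
    (rmin : ℝ) (hrmin : IsLeast (Set.range r) rmin) :
    ∀ s : ℝ,
      youngConj (fun t => ∑ i, δ i * |t| ^ (r i + 1)) (2 * s) ≤
        ((2 : ℝ) ^ ((1 : ℝ) / rmin)) ^ (rmin + 1) *
          youngConj (fun t => ∑ i, δ i * |t| ^ (r i + 1)) s := by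
  intro s
  set N : ℝ → ℝ := fun t => ∑ i, δ i * |t| ^ (r i + 1) with hN
  obtain ⟨⟨j, hj⟩, hlb⟩ := hrmin
  have hrmin_pos : 0 < rmin := hj ▸ hr j
  set θ : ℝ := (2 : ℝ) ^ ((1 : ℝ) / rmin) with hθ
  have hθpos : 0 < θ := Real.rpow_pos_of_pos (by norm_num) _
  have hθ1 : 1 < θ := by
    rw [hθ]
    exact Real.one_lt_rpow_iff_of_pos (by norm_num) |>.2
      (Or.inl ⟨by norm_num, by positivity⟩)
  have hθr : θ ^ rmin = 2 := by
    rw [hθ, ← Real.rpow_mul (by norm_num), one_div_mul_cancel hrmin_pos.ne',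
      Real.rpow_one]
  have hC : θ ^ (rmin + 1) = 2 * θ := by
    rw [Real.rpow_add hθpos, hθr, Real.rpow_one]
  have hCpos : (0 : ℝ) < θ ^ (rmin + 1) := Real.rpow_pos_of_pos hθpos _
  have hN0 : N 0 = 0 := by
    simp only [hN, abs_zero]
    refine Finset.sum_eq_zero fun i _ => ?_
    rw [Real.zero_rpow (by have := hr i; linarith), mul_zero]
  -- boundedness of the defining set
  have hbdd : ∀ a : ℝ, 0 ≤ a →
      BddAbove {v : ℝ | ∃ ρ : ℝ, 0 ≤ ρ ∧ v = ρ * a - N ρ} := by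
    intro a ha
    obtain ⟨K, hK⟩ := aux_bound (δ j) (r j + 1) a (hδ j) (by have := hr j; linarith) ha
    refine ⟨K, fun v hv => ?_⟩
    obtain ⟨ρ, hρ, rfl⟩ := hv
    have hterm : δ j * |ρ| ^ (r j + 1) ≤ N ρ := by
      rw [hN]
      exact Finset.single_le_sum (f := fun i => δ i * |ρ| ^ (r i + 1))
        (fun i _ => mul_nonneg (hδ i).le (Real.rpow_nonneg (abs_nonneg _) _)) (Finset.mem_univ j)
    have := hK ρ hρ
    rw [abs_of_nonneg hρ] at hterm
    linarith
  have hne : ∀ a : ℝ, ({v : ℝ | ∃ ρ : ℝ, 0 ≤ ρ ∧ v = ρ * a - N ρ}).Nonempty :=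
    fun a => ⟨0 * a - N 0, 0, le_refl 0, rfl⟩
  -- main estimate
  rw [youngConj, youngConj]
  apply csSup_le (hne _)
  · intro v hv
    obtain ⟨ρ, hρ, rfl⟩ := hv
    set σ : ℝ := ρ / θ with hσ
    have hσ0 : 0 ≤ σ := div_nonneg hρ hθpos.le
    have hρσ : ρ = θ * σ := by rw [hσ]; field_simp [hθpos.ne']
    -- N (θ σ) ≥ θ^(rmin+1) * N σ
    have hNθ : θ ^ (rmin + 1) * N σ ≤ N (θ * σ) := by
      rw [hN, Finset.mul_sum]
      apply Finset.sum_le_sum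
      intro i _
      have habs : |θ * σ| = θ * σ := abs_of_nonneg (mul_nonneg hθpos.le hσ0)
      have habs2 : |σ| = σ := abs_of_nonneg hσ0
      rw [habs, habs2, Real.mul_rpow hθpos.le hσ0]
      have hexp : θ ^ (rmin + 1) ≤ θ ^ (r i + 1) :=
        Real.rpow_le_rpow_of_exponent_le hθ1.le
          (add_le_add_left (hlb ⟨i, rfl⟩) 1)
      calc θ ^ (rmin + 1) * (δ i * σ ^ (r i + 1))
          ≤ θ ^ (r i + 1) * (δ i * σ ^ (r i + 1)) :=
            mul_le_mul_of_nonneg_right hexp (mul_nonneg (hδ i).le (Real.rpow_nonneg hσ0 _))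
        _ = δ i * (θ ^ (r i + 1) * σ ^ (r i + 1)) := by ring
    have habs2s : |2 * s| = 2 * |s| := by rw [abs_mul]; norm_num
    have hmem : σ * |s| - N σ ∈ {v : ℝ | ∃ ρ : ℝ, 0 ≤ ρ ∧ v = ρ * |s| - N ρ} :=
      ⟨σ, hσ0, rfl⟩
    have hle : σ * |s| - N σ ≤ sSup {v : ℝ | ∃ ρ : ℝ, 0 ≤ ρ ∧ v = ρ * |s| - N ρ} :=
      le_csSup (hbdd |s| (abs_nonneg s)) hmem
    calc ρ * |2 * s| - N ρ = θ * σ * (2 * |s|) - N (θ * σ) := by rw [hρσ, habs2s]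
      _ ≤ θ ^ (rmin + 1) * (σ * |s|) - θ ^ (rmin + 1) * N σ := by
          rw [hC] at hNθ ⊢
          have he : θ * σ * (2 * |s|) = 2 * θ * (σ * |s|) := by ring
          linarith
      _ = θ ^ (rmin + 1) * (σ * |s| - N σ) := by ring
      _ ≤ θ ^ (rmin + 1) * sSup {v : ℝ | ∃ ρ : ℝ, 0 ≤ ρ ∧ v = ρ * |s| - N ρ} :=
          mul_le_mul_of_nonneg_left hle hCpos.le
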